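/- arXiv:2209.11583 — 2 statements merged into one kernel-verified Lean document; each statement's English description precedes it below -/
import Mathlib

section
/- If A is an element of SL(2, ℤ/3) with A ≠ 1, then the order of A is 2, 3, 4, or 6. -/
instance : DecidableEq (Matrix.SpecialLinearGroup (Fin 2) (ZMod 3)) :=
  fun A B => decidable_of_iff (A.1 = B.1) Subtype.ext_iff.symm

lemma aux_stmt11 : ∀ A : Matrix.SpecialLinearGroup (Fin 2) (ZMod 3),
    A ^ 4 = 1 ∨ A ^ 6 = 1 := by decide

theorem stmt_11 (A : Matrix.SpecialLinearGroup (Fin 2) (ZMod 3)) (h : A ≠ 1) :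
    orderOf A = 2 ∨ orderOf A = 3 ∨ orderOf A = 4 ∨ orderOf A = 6 := by
  have h1 : orderOf A ≠ 1 := by simpa [orderOf_eq_one_iff] using h
  rcases aux_stmt11 A with h4 | h6
  · have hd := orderOf_dvd_of_pow_eq_one h4
    have hle : orderOf A ≤ 4 := Nat.le_of_dvd (by norm_num) hd
    interval_cases h' : orderOf A <;> simp_all <;> omega
  · have hd := orderOf_dvd_of_pow_eq_one h6
    have hle : orderOf A ≤ 6 := Nat.le_of_dvd (by norm_num) hd
    interval_cases h' : orderOf A <;> simp_all <;> omega
end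

section
/- Let m be a natural number divisible by 4. Then no element A of SL(2, ℤ/3) satisfies A^m = -1. -/
instance inst_s13 : DecidableEq (Matrix.SpecialLinearGroup (Fin 2) (ZMod 3)) :=
  fun a b => decidable_of_iff (a.1 = b.1) Subtype.ext_iff.symm

lemma sl23_pow12 : ∀ A : Matrix.SpecialLinearGroup (Fin 2) (ZMod 3), A ^ 12 = 1 := by
  decide

lemma sl23_neg3 : (-1 : Matrix.SpecialLinearGroup (Fin 2) (ZMod 3)) ^ 3 = -1 := by
  decide

lemma sl23_ne : ¬ ((1 : Matrix.SpecialLinearGroup (Fin 2) (ZMod 3)) = -1) := by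
  decide

theorem stmt_13 (m : ℕ) (h4 : 4 ∣ m)
    (A : Matrix.SpecialLinearGroup (Fin 2) (ZMod 3)) :
    A ^ m ≠ -1 := by
  obtain ⟨k, rfl⟩ := h4
  intro h
  have h12 : (A ^ 12) ^ k = (A ^ (4 * k)) ^ 3 := by
    rw [← pow_mul, ← pow_mul]; ring_nf
  rw [sl23_pow12, one_pow, h, sl23_neg3] at h12
  exact sl23_ne h12
end
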